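/- Let s, r, q be real numbers with s ≥ 0, r > 0, and q² ≤ s·r. Define T_CLR = (1/2)(s − r + √((s + r)² − 4(sr − q²))). Then (s + r)² − 4(sr − q²) = (s − r)² + 4q² ≥ 0, and q²/r ≤ T_CLR ≤ s. In other words, the mrCLR statistic always lies between the mrK statistic and the mrAR statistic: T_mrK ≤ T_mrCLR ≤ T_mrAR. -/

import Mathlib

/-- For `s ≥ 0`, `r > 0` and `q² ≤ s·r`, the CLR statistic
`T_CLR = (1/2)(s - r + √((s + r)² - 4(sr - q²)))` satisfies
`(s + r)² - 4(sr - q²) = (s - r)² + 4q² ≥ 0` and `q²/r ≤ T_CLR ≤ s`: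
the mrCLR statistic lies between the mrK and mrAR statistics. -/
theorem clr_between_k_and_ar (s r q : ℝ) (hs : 0 ≤ s) (hr : 0 < r) (hq : q ^ 2 ≤ s * r) :
    ((s + r) ^ 2 - 4 * (s * r - q ^ 2) = (s - r) ^ 2 + 4 * q ^ 2 ∧
      0 ≤ (s + r) ^ 2 - 4 * (s * r - q ^ 2)) ∧
    q ^ 2 / r ≤ (1 / 2) * (s - r + Real.sqrt ((s + r) ^ 2 - 4 * (s * r - q ^ 2))) ∧
    (1 / 2) * (s - r + Real.sqrt ((s + r) ^ 2 - 4 * (s * r - q ^ 2))) ≤ s := by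
  set D := (s + r) ^ 2 - 4 * (s * r - q ^ 2) with hD
  have hDeq : D = (s - r) ^ 2 + 4 * q ^ 2 := by ring
  have hDpos : 0 ≤ D := by nlinarith [sq_nonneg (s - r), sq_nonneg q]
  have hsqrt_nonneg := Real.sqrt_nonneg D
  have hupper : Real.sqrt D ≤ s + r := by
    rw [show s + r = Real.sqrt ((s + r) ^ 2) by
      rw [Real.sqrt_sq (by positivity)]]
    exact Real.sqrt_le_sqrt (by nlinarith)
  have hlower : 2 * q ^ 2 / r - s + r ≤ Real.sqrt D := by
    rcases le_or_gt (2 * q ^ 2 / r - s + r) 0 with h | h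
    · linarith
    · apply (Real.le_sqrt h.le hDpos).mpr
      have hr' : r ≠ 0 := ne_of_gt hr
      rw [hDeq]
      rw [div_sub' hr', div_add' _ _ _ hr', div_pow,
        div_le_iff₀ (by positivity)]
      nlinarith [sq_nonneg q, mul_nonneg (sq_nonneg q) (sub_nonneg.mpr hq),
        sq_nonneg (q * r), hr.le]
  refine ⟨⟨hDeq, hDpos⟩, ?_, ?_⟩
  · have : q ^ 2 / r = (2 * q ^ 2 / r) / 2 := by ring
    rw [this]
    linarith
  · linarith
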